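/- Let λ ∈ ℝ, v₃ > 0, θ₀ ∈ ℝ. If (y, z, θ) solves y' = cos θ, z' = sin θ, θ' = 2λ + v₃ cos θ with (y, z, θ)(0) = (0, 0, θ₀), and (ỹ, z̃, θ̃) solves the same system with λ replaced by −λ and initial conditions (0, 0, π − θ₀), then y(s) = −ỹ(s), z(s) = z̃(s), and θ(s) = π − θ̃(s) for all s ∈ ℝ. -/

import Mathlib

open Set

private lemma lipschitz_field (lam v₃ : ℝ) (hv : 0 < v₃) :
    LipschitzWith ⟨v₃, hv.le⟩ (fun x => 2*lam + v₃ * Real.cos x) := by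
  apply lipschitzWith_of_nnnorm_deriv_le
  · exact fun x => (differentiableAt_const _).add ((Real.differentiable_cos x).const_mul _)
  · intro x
    have hderiv : deriv (fun x => 2*lam + v₃ * Real.cos x) x = v₃ * (-Real.sin x) := by
      rw [deriv_const_add]
      simp [Real.deriv_cos]
    rw [hderiv]
    refine NNReal.coe_le_coe.mp ?_
    simp only [coe_nnnorm, Real.norm_eq_abs, NNReal.coe_mk, abs_mul, abs_neg]
    calc |v₃| * |Real.sin x| ≤ |v₃| * 1 := by
          exact mul_le_mul_of_nonneg_left
            (abs_le.mpr ⟨Real.neg_one_le_sin x, Real.sin_le_one x⟩) (abs_nonneg _)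
      _ = v₃ := by rw [mul_one, abs_of_pos hv]

theorem stmt5 (lam v₃ θ₀ : ℝ) (hv : 0 < v₃)
    (y z θ yt zt θt : ℝ → ℝ)
    (hy : ∀ s, HasDerivAt y (Real.cos (θ s)) s)
    (hz : ∀ s, HasDerivAt z (Real.sin (θ s)) s)
    (hθ : ∀ s, HasDerivAt θ (2*lam + v₃ * Real.cos (θ s)) s)
    (hy0 : y 0 = 0) (hz0 : z 0 = 0) (hθ0 : θ 0 = θ₀)
    (hyt : ∀ s, HasDerivAt yt (Real.cos (θt s)) s)
    (hzt : ∀ s, HasDerivAt zt (Real.sin (θt s)) s)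
    (hθt : ∀ s, HasDerivAt θt (2*(-lam) + v₃ * Real.cos (θt s)) s)
    (hyt0 : yt 0 = 0) (hzt0 : zt 0 = 0) (hθt0 : θt 0 = Real.pi - θ₀) :
    ∀ s, y s = -(yt s) ∧ z s = zt s ∧ θ s = Real.pi - θt s := by
  -- θ and π - θt solve the same ODE with the same initial condition
  have hφ' : ∀ t, HasDerivAt (fun t => Real.pi - θt t)
      (2*lam + v₃ * Real.cos (Real.pi - θt t)) t := by
    intro t
    have := (hθt t).const_sub Real.pi
    refine this.congr_deriv ?_
    rw [Real.cos_pi_sub]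
    ring
  have key : ∀ s, θ s = Real.pi - θt s := by
    intro s
    have hmem : (0:ℝ) ∈ Ioo (-(|s|+1)) (|s|+1) := by
      constructor <;> nlinarith [abs_nonneg s]
    have hsmem : s ∈ Ioo (-(|s|+1)) (|s|+1) := by
      constructor <;> nlinarith [le_abs_self s, neg_abs_le s]
    exact ODE_solution_unique_of_mem_Ioo
      (fun t _ => ((lipschitz_field lam v₃ hv).lipschitzOnWith (s := univ)))
      hmem (fun t _ => ⟨hθ t, mem_univ _⟩) (fun t _ => ⟨hφ' t, mem_univ _⟩)
      (by rw [hθ0, hθt0]; ring) hsmem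
  intro s
  have hysum : ∀ t, HasDerivAt (fun t => y t + yt t) 0 t := by
    intro t
    have := (hy t).add (hyt t)
    refine this.congr_deriv ?_
    rw [key t, Real.cos_pi_sub]
    ring
  have hzdiff : ∀ t, HasDerivAt (fun t => z t - zt t) 0 t := by
    intro t
    have := (hz t).sub (hzt t)
    refine this.congr_deriv ?_
    rw [key t, Real.sin_pi_sub]
    ring
  have h1 : y s + yt s = y 0 + yt 0 :=
    is_const_of_deriv_eq_zero (fun t => (hysum t).differentiableAt)
      (fun t => (hysum t).deriv) s 0
  have h2 : z s - zt s = z 0 - zt 0 :=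
    is_const_of_deriv_eq_zero (fun t => (hzdiff t).differentiableAt)
      (fun t => (hzdiff t).deriv) s 0
  rw [hy0, hyt0] at h1
  rw [hz0, hzt0] at h2
  exact ⟨by linarith, by linarith, key s⟩
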